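/- The function F(z) = (1+z)/z² · log(1+z) − 1/z is strictly decreasing on (0,∞), with F(z) → 1/2 as z → 0⁺ and F(z) → 0 as z → ∞. -/

import Mathlib

open Filter Set

private lemma hasDerivAt_g {x : ℝ} (hx : -1 < x) :
    HasDerivAt (fun z : ℝ => (z + 2) * Real.log (1 + z) - 2 * z)
      (Real.log (1 + x) + (x + 2) / (1 + x) - 2) x := by
  have hne : (1 : ℝ) + x ≠ 0 := by linarith
  have h1 : HasDerivAt (fun z : ℝ => 1 + z) 1 x := by
    simpa using (hasDerivAt_id x).const_add 1
  have h2 : HasDerivAt (fun z : ℝ => Real.log (1 + z)) (1 / (1 + x)) x := by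
    simpa using h1.log hne
  have h3 : HasDerivAt (fun z : ℝ => z + 2) 1 x := by
    simpa using (hasDerivAt_id x).add_const 2
  have h4 := (h3.mul h2).sub ((hasDerivAt_id x).const_mul 2)
  refine h4.congr_deriv ?_
  field_simp

private lemma key_ineq {x : ℝ} (hx : 0 < x) : 2 * x < (x + 2) * Real.log (1 + x) := by
  have hmono : StrictMonoOn (fun z : ℝ => (z + 2) * Real.log (1 + z) - 2 * z) (Ici 0) := by
    apply strictMonoOn_of_deriv_pos (convex_Ici 0)
    · intro z hz
      have hz' : (0:ℝ) ≤ z := hz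
      exact (hasDerivAt_g (by linarith)).continuousAt.continuousWithinAt
    · intro z hz
      rw [interior_Ici] at hz
      have hz' : 0 < z := hz
      have hne : (1:ℝ) + z ≠ 0 := by linarith
      rw [(hasDerivAt_g (by linarith)).deriv]
      have hlog : z / (1 + z) < Real.log (1 + z) := by
        have h := Real.log_lt_sub_one_of_pos (x := 1/(1+z)) (by positivity)
          (by
            have : 1/(1+z) < 1 := by
              rw [div_lt_one (by linarith)]; linarith
            exact ne_of_lt this)
        rw [one_div, Real.log_inv] at h
        have h2 : 1 - (1+z)⁻¹ < Real.log (1+z) := by linarith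
        have h3 : 1 - (1+z)⁻¹ = z/(1+z) := by field_simp; ring
        linarith
      have e : (z + 2)/(1 + z) - 2 = -(z/(1+z)) := by field_simp; ring
      linarith
  have h0 : (0:ℝ) ∈ Ici (0:ℝ) := self_mem_Ici
  have hxm : x ∈ Ici (0:ℝ) := le_of_lt hx
  have := hmono h0 hxm hx
  simp only [Real.log_one] at this
  norm_num at this
  linarith

private lemma hasDerivAt_F {x : ℝ} (hx : 0 < x) :
    HasDerivAt (fun z : ℝ => (1 + z) / z ^ 2 * Real.log (1 + z) - 1 / z)
      ((2 * x - (x + 2) * Real.log (1 + x)) / x ^ 3) x := by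
  have hne : (1:ℝ) + x ≠ 0 := by linarith
  have hxne : x ≠ 0 := ne_of_gt hx
  have h1 : HasDerivAt (fun z : ℝ => 1 + z) 1 x := by
    simpa using (hasDerivAt_id x).const_add 1
  have h2 : HasDerivAt (fun z : ℝ => Real.log (1 + z)) (1 / (1 + x)) x := by
    simpa using h1.log hne
  have hp : HasDerivAt (fun z : ℝ => z ^ 2) (2 * x) x := by
    simpa using hasDerivAt_pow 2 x
  have hq : HasDerivAt (fun z : ℝ => (1 + z) / z ^ 2)
      ((1 * x ^ 2 - (1 + x) * (2 * x)) / (x ^ 2) ^ 2) x := h1.div hp (by positivity)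
  have hm := hq.mul h2
  have h5 : HasDerivAt (fun z : ℝ => 1 / z) (-(x ^ 2)⁻¹) x := by
    simpa [one_div] using hasDerivAt_inv hxne
  have h6 := hm.sub h5
  refine h6.congr_deriv ?_
  field_simp
  ring

/-- The function `F(z) = (1+z)/z² · log(1+z) − 1/z` is strictly decreasing on `(0,∞)`,
tends to `1/2` as `z → 0⁺` and to `0` as `z → ∞`. -/
theorem F_strictAnti_and_limits :
    StrictAntiOn (fun z : ℝ => (1 + z) / z ^ 2 * Real.log (1 + z) - 1 / z) (Ioi 0) ∧
    Tendsto (fun z : ℝ => (1 + z) / z ^ 2 * Real.log (1 + z) - 1 / z)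
      (nhdsWithin 0 (Ioi 0)) (nhds (1 / 2)) ∧
    Tendsto (fun z : ℝ => (1 + z) / z ^ 2 * Real.log (1 + z) - 1 / z)
      atTop (nhds 0) := by
  refine ⟨?_, ?_, ?_⟩
  · -- strictly decreasing
    apply strictAntiOn_of_deriv_neg (convex_Ioi 0)
    · intro z hz
      exact (hasDerivAt_F hz).continuousAt.continuousWithinAt
    · intro z hz
      rw [interior_Ioi] at hz
      rw [(hasDerivAt_F hz).deriv]
      have hz' : (0:ℝ) < z := hz
      apply div_neg_of_neg_of_pos
      · linarith [key_ineq hz']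
      · positivity
  · -- limit at 0⁺, by L'Hôpital
    have hslope : Tendsto (fun z : ℝ => Real.log (1 + z) / z) (nhdsWithin 0 (Ioi 0)) (nhds 1) := by
      have hd : HasDerivAt (fun z : ℝ => Real.log (1 + z)) 1 0 := by
        have h1 : HasDerivAt (fun z : ℝ => 1 + z) 1 0 := by
          simpa using (hasDerivAt_id (0:ℝ)).const_add 1
        simpa using h1.log (by norm_num)
      have ht := hasDerivAt_iff_tendsto_slope.mp hd
      have hmono : nhdsWithin (0:ℝ) (Ioi 0) ≤ nhdsWithin 0 {(0:ℝ)}ᶜ :=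
        nhdsWithin_mono 0 (fun z hz => ne_of_gt hz)
      refine (ht.mono_left hmono).congr (fun z => ?_)
      simp [slope_def_field, Real.log_one]
    have hdiv : Tendsto (fun z : ℝ => Real.log (1 + z) / (2 * z))
        (nhdsWithin 0 (Ioi 0)) (nhds (1 / 2)) := by
      have := hslope.div_const 2
      refine this.congr (fun z => ?_)
      rw [div_div, mul_comm]
    have hff' : ∀ x ∈ Ioo (0:ℝ) 1,
        HasDerivAt (fun z : ℝ => (1 + z) * Real.log (1 + z) - z) (Real.log (1 + x)) x := by
      intro x hx
      have hne : (1:ℝ) + x ≠ 0 := by have := hx.1; linarith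
      have h1 : HasDerivAt (fun z : ℝ => 1 + z) 1 x := by
        simpa using (hasDerivAt_id x).const_add 1
      have h2 : HasDerivAt (fun z : ℝ => Real.log (1 + z)) (1 / (1 + x)) x := by
        simpa using h1.log hne
      have h3 := (h1.mul h2).sub (hasDerivAt_id x)
      refine h3.congr_deriv ?_
      field_simp
      ring
    have hgg' : ∀ x ∈ Ioo (0:ℝ) 1, HasDerivAt (fun z : ℝ => z ^ 2) (2 * x) x := by
      intro x _
      simpa using hasDerivAt_pow 2 x
    have hg'ne : ∀ x ∈ Ioo (0:ℝ) 1, 2 * x ≠ 0 := by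
      intro x hx
      have := hx.1
      positivity
    have hf0 : Tendsto (fun z : ℝ => (1 + z) * Real.log (1 + z) - z)
        (nhdsWithin 0 (Ioi 0)) (nhds 0) := by
      have hc : ContinuousAt (fun z : ℝ => (1 + z) * Real.log (1 + z) - z) 0 := by
        have h1 : HasDerivAt (fun z : ℝ => 1 + z) 1 0 := by
          simpa using (hasDerivAt_id (0:ℝ)).const_add 1
        have h2 : HasDerivAt (fun z : ℝ => Real.log (1 + z)) (1 / (1 + 0)) 0 := by
          simpa using h1.log (by norm_num)
        exact ((h1.mul h2).sub (hasDerivAt_id 0)).continuousAt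
      have ht : Tendsto (fun z : ℝ => (1 + z) * Real.log (1 + z) - z) (nhds 0)
          (nhds ((1 + 0) * Real.log (1 + 0) - 0)) := hc
      have h2 := ht.mono_left (nhdsWithin_le_nhds (s := Ioi (0:ℝ)))
      simpa using h2
    have hg0 : Tendsto (fun z : ℝ => z ^ 2) (nhdsWithin 0 (Ioi 0)) (nhds 0) := by
      have : Tendsto (fun z : ℝ => z ^ 2) (nhds 0) (nhds 0) := by
        simpa using (continuous_pow 2).tendsto (0:ℝ)
      exact this.mono_left nhdsWithin_le_nhds
    have hlh := HasDerivAt.lhopital_zero_right_on_Ioo (by norm_num : (0:ℝ) < 1) hff' hgg' hg'ne hf0 hg0 hdiv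
    refine hlh.congr' ?_
    filter_upwards [self_mem_nhdsWithin] with z hz
    have hz' : (0:ℝ) < z := hz
    have hne : (1:ℝ) + z ≠ 0 := by linarith
    field_simp
  · -- limit at atTop
    have h1 : Tendsto (fun z : ℝ => Real.log (1 + z) / (1 + z)) atTop (nhds 0) := by
      have hlo := Real.isLittleO_log_id_atTop.tendsto_div_nhds_zero
      have hcomp : Tendsto (fun z : ℝ => 1 + z) atTop atTop :=
        tendsto_atTop_add_const_left atTop 1 tendsto_id
      exact hlo.comp hcomp
    have h2 : Tendsto (fun z : ℝ => (1 + z) / z) atTop (nhds 1) := by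
      have := tendsto_inv_atTop_zero.add (tendsto_const_nhds (α := ℝ) (x := (1:ℝ)) (f := atTop))
      norm_num at this
      refine this.congr' ?_
      filter_upwards [eventually_gt_atTop (0:ℝ)] with z hz
      field_simp
    have h3 : Tendsto (fun z : ℝ => Real.log (1 + z) / (1 + z) * ((1 + z) / z) ^ 2)
        atTop (nhds (0 * 1 ^ 2)) := h1.mul (h2.pow 2)
    have h4 : Tendsto (fun z : ℝ => 1 / z) atTop (nhds 0) := by
      simpa [one_div] using tendsto_inv_atTop_zero
    have h5 := h3.sub h4
    norm_num at h5
    refine h5.congr' ?_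
    filter_upwards [eventually_gt_atTop (0:ℝ)] with z hz
    have hne : (1:ℝ) + z ≠ 0 := by linarith
    have hzne : z ≠ 0 := ne_of_gt hz
    field_simp
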